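/- Let n ≥ 1 and let (d(t), ρ(t)) be a C¹ solution on an interval of the ODE system d' = -(1/n)d² - (ρ - 1), ρ' = -dρ, with ρ(t) > 0. Then the quantity I(d,ρ) := ρ^{-2/n}(d² - nF(ρ)), with F as above, is constant along the solution. -/

import Mathlib

open Real intervalIntegral

noncomputable def I (n : ℕ) (d ρ : ℝ) : ℝ :=
  d^2 * ρ ^ (-(2 : ℝ)/n) - 2 * ∫ r in (1 : ℝ)..ρ, (1 - 1/r) * r ^ (-(2 : ℝ)/n)

theorem invariant_constant (n : ℕ) (hn : 1 ≤ n) (J : Set ℝ) (hJ : Convex ℝ J)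
    (d ρ : ℝ → ℝ)
    (hρpos : ∀ t ∈ J, 0 < ρ t)
    (hd : ∀ t ∈ J, HasDerivAt d (-(1/(n : ℝ)) * (d t)^2 - (ρ t - 1)) t)
    (hρ : ∀ t ∈ J, HasDerivAt ρ (-(d t) * ρ t) t) :
    ∀ s ∈ J, ∀ t ∈ J, I n (d s) (ρ s) = I n (d t) (ρ t) := by
  have hn' : (n : ℝ) ≠ 0 := Nat.cast_ne_zero.mpr (by omega)
  set c : ℝ := -(2 : ℝ)/n with hc
  set f : ℝ → ℝ := fun r => (1 - 1/r) * r ^ c with hf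
  have hfc : ContinuousOn f (Set.Ioi (0:ℝ)) := by
    apply ContinuousOn.mul
    · exact continuousOn_const.sub (continuousOn_const.div continuousOn_id
        (fun r hr => ne_of_gt hr))
    · exact continuousOn_id.rpow_const (fun r hr => Or.inl (ne_of_gt hr))
  have hkey : ∀ x ∈ J, HasDerivWithinAt (fun t => I n (d t) (ρ t)) 0 J x := by
    intro x hx
    have hρx := hρpos x hx
    have hρne : ρ x ≠ 0 := ne_of_gt hρx
    have h1 : HasDerivAt (fun t => (d t)^2)
        (2 * d x ^ 1 * (-(1/(n : ℝ)) * (d x)^2 - (ρ x - 1))) x := (hd x hx).pow 2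
    have h2 : HasDerivAt (fun t => ρ t ^ c)
        ((c * ρ x ^ (c - 1)) * (-(d x) * ρ x)) x :=
      (Real.hasDerivAt_rpow_const (Or.inl hρne)).comp x (hρ x hx)
    have hsub : Set.uIcc 1 (ρ x) ⊆ Set.Ioi (0:ℝ) := by
      intro r hr
      exact lt_of_lt_of_le (lt_min one_pos hρx) hr.1
    have hint : IntervalIntegrable f MeasureTheory.volume 1 (ρ x) :=
      (hfc.mono hsub).intervalIntegrable
    have hmeas : StronglyMeasurableAtFilter f (nhds (ρ x)) :=
      hfc.stronglyMeasurableAtFilter isOpen_Ioi (ρ x) hρx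
    have hcontAt : ContinuousAt f (ρ x) := hfc.continuousAt (Ioi_mem_nhds hρx)
    have h3 : HasDerivAt (fun y => ∫ r in (1:ℝ)..y, f r) (f (ρ x)) (ρ x) :=
      intervalIntegral.integral_hasDerivAt_right hint hmeas hcontAt
    have h3' : HasDerivAt (fun t => ∫ r in (1:ℝ)..(ρ t), f r)
        (f (ρ x) * (-(d x) * ρ x)) x := h3.comp x (hρ x hx)
    have hg : HasDerivAt (fun t => I n (d t) (ρ t))
        ((2 * d x ^ 1 * (-(1/(n : ℝ)) * (d x)^2 - (ρ x - 1))) * ρ x ^ c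
          + (d x)^2 * ((c * ρ x ^ (c - 1)) * (-(d x) * ρ x))
          - 2 * (f (ρ x) * (-(d x) * ρ x))) x := by
      have := (h1.mul h2).sub (h3'.const_mul 2)
      exact this.congr_of_eventuallyEq (Filter.Eventually.of_forall fun t => rfl)
    have hzero : (2 * d x ^ 1 * (-(1/(n : ℝ)) * (d x)^2 - (ρ x - 1))) * ρ x ^ c
          + (d x)^2 * ((c * ρ x ^ (c - 1)) * (-(d x) * ρ x))
          - 2 * (f (ρ x) * (-(d x) * ρ x)) = 0 := by
      have hpow : ρ x ^ (c - 1) = ρ x ^ c / ρ x := Real.rpow_sub_one hρne c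
      simp only [hf, hpow, hc]
      field_simp
      rw [show -(2 / (n:ℝ)) = 1 + (-2 - (n:ℝ)) / n by rw [sub_div, div_self hn']; ring,
        Real.rpow_add hρx, Real.rpow_one]
      ring
    rw [hzero] at hg
    exact hg.hasDerivWithinAt
  intro s hs t ht
  have hbound : ∀ x ∈ J, ‖(0:ℝ)‖ ≤ 0 := by simp
  have := hJ.norm_image_sub_le_of_norm_hasDerivWithin_le
    (f' := fun _ => (0:ℝ)) hkey hbound ht hs
  simp only [zero_mul, norm_le_zero_iff, sub_eq_zero] at this
  exact this
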